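/- If f, g : X → Y are coarse maps between metric spaces such that for every coarse ultrafilter 𝔉 on X the pushforwards f_*𝔉 and g_*𝔉 are asymptotically alike, then f and g are close (i.e., sup_{x∈X} d(f(x), g(x)) < ∞). -/
import Mathlib


open Set Bornology Metric

/-- `E ⊆ X × X` is an entourage if `sup_{(x,y) ∈ E} d(x,y) < ∞`. -/
def IsEnt {X : Type*} [PseudoMetricSpace X] (E : Set (X × X)) : Prop :=
  ∃ C : ℝ, ∀ p ∈ E, dist p.1 p.2 ≤ C

/-- `E[A] = {y : ∃ a ∈ A, (a,y) ∈ E}`. -/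
def entImg {X : Type*} [PseudoMetricSpace X] (E : Set (X × X)) (A : Set X) : Set X :=
  {y | ∃ a ∈ A, (a, y) ∈ E}

/-- `A` and `B` are not coarsely disjoint: some entourage `E` has `E[A] ∩ E[B]` unbounded. -/
def NotCD {X : Type*} [PseudoMetricSpace X] (A B : Set X) : Prop :=
  ∃ E : Set (X × X), IsEnt E ∧ ¬ IsBounded (entImg E A ∩ entImg E B)

/-- `A` and `B` are coarsely disjoint: every entourage `E` has `E[A] ∩ E[B]` bounded. -/
def CD {X : Type*} [PseudoMetricSpace X] (A B : Set X) : Prop :=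
  ∀ E : Set (X × X), IsEnt E → IsBounded (entImg E A ∩ entImg E B)

/-- Coarsely uniform: `f × f` maps entourages to entourages. -/
def CUnif {X Y : Type*} [PseudoMetricSpace X] [PseudoMetricSpace Y] (f : X → Y) : Prop :=
  ∀ E : Set (X × X), IsEnt E → IsEnt ((fun p : X × X => (f p.1, f p.2)) '' E)

/-- Coarsely proper: preimages of bounded sets are bounded. -/
def CProper {X Y : Type*} [PseudoMetricSpace X] [PseudoMetricSpace Y] (f : X → Y) : Prop :=
  ∀ B : Set Y, IsBounded B → IsBounded (f ⁻¹' B)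

/-- A coarse map is coarsely uniform and coarsely proper. -/
def Coarse {X Y : Type*} [PseudoMetricSpace X] [PseudoMetricSpace Y] (f : X → Y) : Prop :=
  CUnif f ∧ CProper f

/-- Coarsely injective: `(f × f)⁻¹` of any entourage is an entourage. -/
def CInj {X Y : Type*} [PseudoMetricSpace X] [PseudoMetricSpace Y] (f : X → Y) : Prop :=
  ∀ F : Set (Y × Y), IsEnt F → IsEnt ((fun p : X × X => (f p.1, f p.2)) ⁻¹' F)

/-- A coarse ultrafilter on a metric space. -/
structure CUF (X : Type*) [PseudoMetricSpace X] where
  sets : Set (Set X)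
  pairClose : ∀ A ∈ sets, ∀ B ∈ sets, NotCD A B
  split : ∀ A B : Set X, A ∪ B ∈ sets → A ∈ sets ∨ B ∈ sets
  univ_mem : Set.univ ∈ sets

/-- Pushforward system of sets of a coarse ultrafilter along a map. -/
def push {X Y : Type*} [PseudoMetricSpace X] [PseudoMetricSpace Y] (f : X → Y) (F : CUF X) :
    Set (Set Y) :=
  {A : Set Y | f ⁻¹' A ∈ F.sets}

/-- Asymptotically alike coarse ultrafilters. -/
def AAlike {X : Type*} [PseudoMetricSpace X] (F G : CUF X) : Prop :=
  ∀ A ∈ F.sets, ∀ B ∈ G.sets, NotCD A B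

/-- Asymptotically alike, on raw systems of subsets. -/
def AAlikeS {X : Type*} [PseudoMetricSpace X] (S T : Set (Set X)) : Prop :=
  ∀ A ∈ S, ∀ B ∈ T, NotCD A B

/-- Unbounded intersection gives NotCD, via the diagonal entourage. -/
lemma notCD_of_unbounded_inter {X : Type*} [PseudoMetricSpace X] {A B : Set X}
    (h : ¬ IsBounded (A ∩ B)) : NotCD A B := by
  refine ⟨{p : X × X | p.1 = p.2}, ⟨0, fun p hp => by simp_all⟩, ?_⟩
  have hA : ∀ C : Set X, entImg {p : X × X | p.1 = p.2} C = C := by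
    intro C; ext y; simp [entImg]
  rw [hA, hA]; exact h

/-- Coarsely uniform maps send bounded sets to bounded sets. -/
lemma cunif_bounded_image {X Y : Type*} [PseudoMetricSpace X] [PseudoMetricSpace Y]
    {f : X → Y} (hf : CUnif f) {S : Set X} (hS : IsBounded S) : IsBounded (f '' S) := by
  obtain ⟨C, hC⟩ := Metric.isBounded_iff.1 hS
  obtain ⟨C', hC'⟩ := hf (S ×ˢ S) ⟨C, fun p hp => hC hp.1 hp.2⟩
  refine Metric.isBounded_iff.2 ⟨C', ?_⟩
  rintro a ⟨s, hs, rfl⟩ b ⟨t, ht, rfl⟩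
  exact hC' (f s, f t) ⟨(s, t), ⟨hs, ht⟩, rfl⟩

/-- coarse maps with asymptotically alike pushforwards of every coarse
ultrafilter are close. -/
theorem stmt6 {X Y : Type*} [MetricSpace X] [MetricSpace Y] (f g : X → Y)
    (hf : Coarse f) (hg : Coarse g)
    (h : ∀ (F : CUF X) (F' G' : CUF Y),
      F'.sets = push f F → G'.sets = push g F → AAlike F' G') :
    ∃ C : ℝ, ∀ x : X, dist (f x) (g x) ≤ C := by
  by_contra hcon
  push_neg at hcon
  -- X is nonempty
  have hXne : Nonempty X := by
    by_contra hX
    obtain ⟨x, -⟩ := hcon 0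
    exact (not_nonempty_iff.1 hX).false x
  obtain ⟨x₀⟩ := hXne
  set q : Y := f x₀ with hq
  -- Step lemma: points with large displacement and images far from q
  have step : ∀ C r : ℝ, ∃ x : X,
      C ≤ dist (f x) (g x) ∧ r ≤ dist q (f x) ∧ r ≤ dist q (g x) := by
    intro C r
    set T : Set X := {x | C ≤ dist (f x) (g x)} with hT
    have hTunb : ¬ IsBounded T := by
      intro hTb
      have hfT := cunif_bounded_image hf.1 hTb
      have hgT := cunif_bounded_image hg.1 hTb
      have hun : IsBounded (f '' T ∪ g '' T) := hfT.union hgT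
      obtain ⟨D, hD⟩ := Metric.isBounded_iff.1 hun
      obtain ⟨x, hx⟩ := hcon (max C D)
      rcases le_or_gt C (dist (f x) (g x)) with hxT | hxT
      · exact absurd (le_trans (hD (Or.inl ⟨x, hxT, rfl⟩) (Or.inr ⟨x, hxT, rfl⟩))
          (le_max_right C D)) (not_le.2 hx)
      · exact absurd (le_trans hxT.le (le_max_left C D)) (not_le.2 hx)
    have hBb : IsBounded (f ⁻¹' closedBall q r ∪ g ⁻¹' closedBall q r) :=
      (hf.2 _ isBounded_closedBall).union (hg.2 _ isBounded_closedBall)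
    have : ¬ T ⊆ f ⁻¹' closedBall q r ∪ g ⁻¹' closedBall q r := by
      intro hsub; exact hTunb (hBb.subset hsub)
    obtain ⟨x, hxT, hxB⟩ := not_subset.1 this
    simp only [mem_union, mem_preimage, Metric.mem_closedBall, not_or, not_le] at hxB
    exact ⟨x, hxT, by rw [dist_comm]; exact hxB.1.le, by rw [dist_comm]; exact hxB.2.le⟩
  -- Recursive sequence
  choose pick hpick1 hpick2 hpick3 using step
  let x : ℕ → X := fun n => Nat.rec (pick 0 0)
    (fun n xn => pick (n + 1) ((n + 1) + (dist q (f xn) ⊔ dist q (g xn)))) n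
  have hxsucc : ∀ n : ℕ, x (n + 1) =
      pick (n + 1) ((n + 1) + (dist q (f (x n)) ⊔ dist q (g (x n)))) := fun n => rfl
  set R : ℕ → ℝ := fun n => dist q (f (x n)) ⊔ dist q (g (x n)) with hR
  have hR0 : ∀ n, 0 ≤ R n := fun n => le_trans dist_nonneg (le_max_left _ _)
  have hfar : ∀ n : ℕ, ((n : ℝ) + 1) + R n ≤ dist q (f (x (n + 1))) ∧
      ((n : ℝ) + 1) + R n ≤ dist q (g (x (n + 1))) := by
    intro n
    rw [hxsucc n]
    exact ⟨by exact hpick2 _ _, by exact hpick3 _ _⟩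
  have hdisp : ∀ n : ℕ, (n : ℝ) ≤ dist (f (x n)) (g (x n)) := by
    intro n
    cases n with
    | zero => exact_mod_cast dist_nonneg
    | succ n => rw [hxsucc n]; push_cast; exact hpick1 _ _
  have hRmono : Monotone R := by
    apply monotone_nat_of_le_succ
    intro n
    have hn : (0:ℝ) ≤ (n:ℝ) := Nat.cast_nonneg n
    calc R n ≤ ((n : ℝ) + 1) + R n := by linarith
    _ ≤ dist q (f (x (n + 1))) := (hfar n).1
    _ ≤ R (n + 1) := le_max_left _ _
  -- key separation estimate
  have key : ∀ n m : ℕ, (max n m : ℝ) ≤ dist (f (x n)) (g (x m)) := by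
    have aux : ∀ n m : ℕ, m ≤ n → ((n : ℝ) + 1) ≤ dist (f (x (n + 1))) (g (x m)) := by
      intro n m hmn
      have h1 := (hfar n).1
      have h2 : dist q (g (x m)) ≤ R n := le_trans (le_max_right _ _) (hRmono hmn)
      have := dist_triangle q (g (x m)) (f (x (n + 1)))
      rw [dist_comm (g (x m))] at this
      linarith
    have aux' : ∀ n m : ℕ, m ≤ n → ((n : ℝ) + 1) ≤ dist (f (x m)) (g (x (n + 1))) := by
      intro n m hmn
      have h1 := (hfar n).2
      have h2 : dist q (f (x m)) ≤ R n := le_trans (le_max_left _ _) (hRmono hmn)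
      have := dist_triangle q (f (x m)) (g (x (n + 1)))
      linarith
    have key' : ∀ n m : ℕ, m < n → (n : ℝ) ≤ dist (f (x n)) (g (x m)) := by
      intro n m hmn
      cases n with
      | zero => omega
      | succ k =>
        have := aux k m (Nat.lt_succ_iff.1 hmn)
        push_cast
        linarith
    have key'' : ∀ n m : ℕ, n < m → (m : ℝ) ≤ dist (f (x n)) (g (x m)) := by
      intro n m hmn
      cases m with
      | zero => omega
      | succ k =>
        have := aux' k n (Nat.lt_succ_iff.1 hmn)
        push_cast
        linarith
    intro n m
    rcases lt_trichotomy n m with hlt | rfl | hlt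
    · rw [max_eq_right (by exact_mod_cast hlt.le : (n:ℝ) ≤ (m:ℝ))]
      exact key'' n m hlt
    · simpa using hdisp n
    · rw [max_eq_left (by exact_mod_cast hlt.le : (m:ℝ) ≤ (n:ℝ))]
      exact key' n m hlt
  set S : Set X := Set.range x with hS
  -- S is unbounded
  have hSunb : ¬ IsBounded S := by
    intro hSb
    have hfS := cunif_bounded_image hf.1 hSb
    obtain ⟨r, hr⟩ := (isBounded_iff_subset_closedBall q).1 hfS
    obtain ⟨n, hn⟩ := exists_nat_gt (r + 1)
    have h1 := (hfar n).1
    have h2 : dist q (f (x (n + 1))) ≤ r := by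
      have := hr ⟨x (n + 1), ⟨n + 1, rfl⟩, rfl⟩
      rwa [Metric.mem_closedBall, dist_comm] at this
    have := hR0 n
    linarith
  -- f '' S and g '' S are coarsely disjoint
  have hCD : ∀ E : Set (Y × Y), IsEnt E → IsBounded (entImg E (f '' S) ∩ entImg E (g '' S)) := by
    rintro E ⟨C, hC⟩
    set N : ℕ := ⌈(2 : ℝ) * C⌉₊ + 1 with hN
    have hsub : entImg E (f '' S) ∩ entImg E (g '' S) ⊆
        ⋃ n ∈ Finset.range N, closedBall (f (x n)) C := by
      rintro y ⟨⟨a, ⟨u, ⟨n, rfl⟩, rfl⟩, hay⟩, ⟨b, ⟨v, ⟨m, rfl⟩, rfl⟩, hby⟩⟩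
      have h1 : dist (f (x n)) y ≤ C := hC _ hay
      have h2 : dist (g (x m)) y ≤ C := hC _ hby
      have h3 : dist (f (x n)) (g (x m)) ≤ 2 * C := by
        have := dist_triangle (f (x n)) y (g (x m))
        rw [dist_comm y] at this; linarith
      have h4 : (n : ℝ) ≤ 2 * C := le_trans (by exact_mod_cast le_max_left n m)
        (le_trans (key n m) h3)
      have h5 : n < N := by
        have := Nat.ceil_mono h4
        rw [Nat.ceil_natCast] at this
        omega
      exact mem_biUnion (Finset.mem_range.2 h5) (Metric.mem_closedBall.2 (by rw [dist_comm]; exact h1))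
    exact ((isBounded_biUnion (Finset.range N).finite_toSet).2
      fun n _ => isBounded_closedBall).subset hsub
  -- the ultrafilter
  have hNeBot : Filter.NeBot (Bornology.cobounded X ⊓ Filter.principal S) := by
    rw [Filter.inf_principal_neBot_iff]
    intro U hU
    have hUc : IsBounded Uᶜ := by rwa [isBounded_compl_iff]
    by_contra hemp
    have : S ⊆ Uᶜ := fun s hs hsU => hemp ⟨s, hsU, hs⟩
    exact hSunb (hUc.subset this)
  obtain ⟨𝒰, h𝒰⟩ := Ultrafilter.exists_le (Bornology.cobounded X ⊓ Filter.principal S)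
  have h𝒰cob : (𝒰 : Filter X) ≤ Bornology.cobounded X := h𝒰.trans inf_le_left
  have h𝒰S : S ∈ 𝒰 := h𝒰.trans inf_le_right (Filter.mem_principal_self S)
  have hmemUnb : ∀ A : Set X, A ∈ 𝒰 → ¬ IsBounded A := by
    intro A hA hAb
    have : Aᶜ ∈ 𝒰 := h𝒰cob (isBounded_def.1 hAb)
    have : A ∩ Aᶜ ∈ 𝒰 := Filter.inter_mem hA this
    rw [Set.inter_compl_self] at this
    exact Filter.empty_notMem (𝒰 : Filter X) this
  -- the coarse ultrafilters
  have hFsplit : ∀ A B : Set X, A ∪ B ∈ {A | A ∈ 𝒰} → A ∈ {A | A ∈ 𝒰} ∨ B ∈ {A | A ∈ 𝒰} :=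
    fun A B hAB => (Ultrafilter.union_mem_iff).1 hAB
  set F : CUF X := ⟨{A | A ∈ 𝒰},
    fun A hA B hB => notCD_of_unbounded_inter (hmemUnb _ (Filter.inter_mem hA hB)),
    hFsplit, Filter.univ_mem⟩ with hF
  have hpush : ∀ (k : X → Y), CProper k → ∀ A ∈ push k F, ∀ B ∈ push k F, NotCD A B := by
    intro k hk A hA B hB
    apply notCD_of_unbounded_inter
    intro hb
    have : IsBounded (k ⁻¹' (A ∩ B)) := hk _ hb
    rw [Set.preimage_inter] at this
    exact hmemUnb _ (Filter.inter_mem hA hB) this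
  have hsplit : ∀ (k : X → Y) (A B : Set Y), A ∪ B ∈ push k F → A ∈ push k F ∨ B ∈ push k F := by
    intro k A B hAB
    have : k ⁻¹' A ∪ k ⁻¹' B ∈ 𝒰 := by rw [← Set.preimage_union]; exact hAB
    exact (Ultrafilter.union_mem_iff).1 this
  have huniv : ∀ k : X → Y, Set.univ ∈ push k F := by
    intro k
    show k ⁻¹' Set.univ ∈ 𝒰
    rw [Set.preimage_univ]
    exact Filter.univ_mem
  set F' : CUF Y := ⟨push f F, hpush f hf.2, hsplit f, huniv f⟩ with hF'
  set G' : CUF Y := ⟨push g F, hpush g hg.2, hsplit g, huniv g⟩ with hG'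
  have halike := h F F' G' rfl rfl
  have hfS : f '' S ∈ F'.sets := by
    show f ⁻¹' (f '' S) ∈ 𝒰
    exact Filter.mem_of_superset h𝒰S (Set.subset_preimage_image f S)
  have hgS : g '' S ∈ G'.sets := by
    show g ⁻¹' (g '' S) ∈ 𝒰
    exact Filter.mem_of_superset h𝒰S (Set.subset_preimage_image g S)
  obtain ⟨E, hE, hEb⟩ := halike (f '' S) hfS (g '' S) hgS
  exact hEb (hCD E hE)
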